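/- arXiv:2205.01055 — 3 statements merged into one kernel-verified Lean document; each statement's English description precedes it below -/
import Mathlib

section
/- Let α > 0 and let b solve b'' = 2α b² with b(0) = b₀, b'(0) = g₀ < 0 and c := (1/2) g₀² - (2/3) α b₀³ ≠ 0. Let b* be the real number with (2/3) α b*³ = -c. Then b is strictly decreasing on an initial interval, reaches the value b* in finite time t₋ = ∫_{b*}^{b₀} db / √((4/3) α b³ + 2c), and b'(t₋) = 0. -/
open Set

private lemma aux_hasDerivAt_fst {W : ℝ → ℝ × ℝ} {p : ℝ × ℝ} {t : ℝ}
    (h : HasDerivAt W p t) : HasDerivAt (fun u => (W u).1) p.1 t := by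
  exact (ContinuousLinearMap.fst ℝ ℝ ℝ).hasFDerivAt.comp_hasDerivAt t h

private lemma aux_hasDerivAt_snd {W : ℝ → ℝ × ℝ} {p : ℝ × ℝ} {t : ℝ}
    (h : HasDerivAt W p t) : HasDerivAt (fun u => (W u).2) p.2 t := by
  exact (ContinuousLinearMap.snd ℝ ℝ ℝ).hasFDerivAt.comp_hasDerivAt t h

private lemma aux_cube_lt {x y : ℝ} (h : x ^ 3 < y ^ 3) : x < y :=
  ((Odd.strictMono_pow (R := ℝ) (by decide : Odd 3)).lt_iff_lt).mp h

private lemma aux_cube_lt' {x y : ℝ} (h : x < y) : x ^ 3 < y ^ 3 :=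
  (Odd.strictMono_pow (R := ℝ) (by decide : Odd 3)) h

set_option maxHeartbeats 1000000 in
theorem stmt_6 (α b₀ g₀ T : ℝ) (hα : 0 < α) (hg₀ : g₀ < 0) (hT : 0 < T)
    (c : ℝ) (hc : c = (1 / 2) * g₀ ^ 2 - (2 / 3) * α * b₀ ^ 3) (hc0 : c ≠ 0)
    (bstar : ℝ) (hbstar : (2 / 3) * α * bstar ^ 3 = -c)
    (b b' : ℝ → ℝ)
    (hb : ∀ t ∈ Set.Ico (0 : ℝ) T, HasDerivAt b (b' t) t)
    (hb' : ∀ t ∈ Set.Ico (0 : ℝ) T, HasDerivAt b' (2 * α * (b t) ^ 2) t)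
    (hb0 : b 0 = b₀) (hb'0 : b' 0 = g₀)
    -- T is the maximal existence time
    (hmax : ∀ T' : ℝ, T < T' →
      ¬ ∃ B B' : ℝ → ℝ, (∀ t ∈ Set.Ico (0 : ℝ) T', HasDerivAt B (B' t) t ∧
          HasDerivAt B' (2 * α * (B t) ^ 2) t) ∧ B 0 = b₀ ∧ B' 0 = g₀) :
    (∃ ε > 0, StrictAntiOn b (Set.Icc 0 ε)) ∧
    (∫ x in bstar..b₀, (Real.sqrt ((4 / 3) * α * x ^ 3 + 2 * c))⁻¹) ∈
      Set.Ico (0 : ℝ) T ∧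
    b (∫ x in bstar..b₀, (Real.sqrt ((4 / 3) * α * x ^ 3 + 2 * c))⁻¹) = bstar ∧
    b' (∫ x in bstar..b₀, (Real.sqrt ((4 / 3) * α * x ^ 3 + 2 * c))⁻¹) = 0 := by
  -- basic facts
  have hs3 : (4 / 3) * α * bstar ^ 3 + 2 * c = 0 := by linarith
  have hbstar0 : bstar ≠ 0 := by
    intro h
    rw [h] at hbstar
    simp at hbstar
    exact hc0 (by linarith)
  -- energy conservation
  have energy : ∀ t ∈ Ico (0 : ℝ) T, (b' t) ^ 2 = 2 * c + (4 / 3) * α * (b t) ^ 3 := by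
    intro t ht
    have key : ∀ u ∈ Icc (0 : ℝ) t,
        (b' u) ^ 2 - (4 / 3) * α * (b u) ^ 3 = (b' 0) ^ 2 - (4 / 3) * α * (b 0) ^ 3 := by
      apply constant_of_has_deriv_right_zero
      · intro u hu
        have hu' : u ∈ Ico (0 : ℝ) T := ⟨hu.1, lt_of_le_of_lt hu.2 ht.2⟩
        exact (((hb' u hu').pow 2).sub
          (((hb u hu').pow 3).const_mul ((4:ℝ)/3*α))).continuousAt.continuousWithinAt
      · intro u hu
        have hu' : u ∈ Ico (0 : ℝ) T := ⟨hu.1, lt_of_lt_of_le hu.2 ht.2.le⟩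
        have H := ((hb' u hu').pow 2).sub (((hb u hu').pow 3).const_mul ((4:ℝ)/3*α))
        have : (2 : ℕ) * b' u ^ (2 - 1) * (2 * α * b u ^ 2) -
            4 / 3 * α * ((3 : ℕ) * b u ^ (3 - 1) * b' u) = 0 := by
          push_cast
          ring
        rw [this] at H
        exact H.hasDerivWithinAt
    have h0 := key t ⟨ht.1, le_refl t⟩
    rw [hb0, hb'0] at h0
    linear_combination h0 - 2 * hc
  have hEnergy0 : g₀ ^ 2 = 2 * c + (4 / 3) * α * b₀ ^ 3 := by
    have := energy 0 ⟨le_refl 0, hT⟩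
    rwa [hb0, hb'0] at this
  have hb₀s : bstar < b₀ := by
    have hg2 : 0 < g₀ ^ 2 := by nlinarith
    apply aux_cube_lt
    nlinarith
  -- sign propagation lemmas
  have bgt : ∀ u ∈ Ico (0 : ℝ) T, (∀ s ∈ Icc (0 : ℝ) u, b s ≠ bstar) →
      ∀ s ∈ Icc (0 : ℝ) u, bstar < b s := by
    intro u hu hne s hs
    by_contra hle
    push_neg at hle
    have hlt : b s < bstar := lt_of_le_of_ne hle (hne s hs)
    have hcont : ContinuousOn b (Icc 0 s) := fun x hx =>
      (hb x ⟨hx.1, lt_of_le_of_lt (le_trans hx.2 hs.2) hu.2⟩).continuousAt.continuousWithinAt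
    obtain ⟨x, hx, hxv⟩ := intermediate_value_Icc' hs.1 hcont
      ⟨hlt.le, by rw [hb0]; exact hb₀s.le⟩
    exact hne x ⟨hx.1, le_trans hx.2 hs.2⟩ hxv
  have b'neg : ∀ u ∈ Ico (0 : ℝ) T, (∀ s ∈ Icc (0 : ℝ) u, bstar < b s) →
      ∀ s ∈ Icc (0 : ℝ) u, b' s < 0 := by
    intro u hu hbig
    have hne : ∀ s ∈ Icc (0 : ℝ) u, b' s ≠ 0 := by
      intro s hs h0
      have hI : s ∈ Ico (0 : ℝ) T := ⟨hs.1, lt_of_le_of_lt hs.2 hu.2⟩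
      have hE := energy s hI
      rw [h0] at hE
      have h2 : bstar ^ 3 < (b s) ^ 3 := aux_cube_lt' (hbig s hs)
      nlinarith
    intro s hs
    by_contra hge
    push_neg at hge
    have hpos : 0 < b' s := lt_of_le_of_ne hge (Ne.symm (hne s hs))
    have hconts : ContinuousOn b' (Icc 0 s) := fun x hx =>
      (hb' x ⟨hx.1, lt_of_le_of_lt (le_trans hx.2 hs.2) hu.2⟩).continuousAt.continuousWithinAt
    obtain ⟨x, hx, hx0⟩ := intermediate_value_Icc hs.1 hconts
      (by rw [hb'0]; exact ⟨hg₀.le, hpos.le⟩)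
    exact hne x ⟨hx.1, le_trans hx.2 hs.2⟩ hx0
  -- Part I : b hits bstar before T
  have hit : ∃ t ∈ Ico (0 : ℝ) T, b t = bstar := by
    by_contra hno
    push_neg at hno
    have hbig : ∀ t ∈ Ico (0:ℝ) T, bstar < b t := fun t ht =>
      bgt t ht (fun s hs => hno s ⟨hs.1, lt_of_le_of_lt hs.2 ht.2⟩) t ⟨ht.1, le_refl t⟩
    have hneg : ∀ t ∈ Ico (0:ℝ) T, b' t < 0 := fun t ht =>
      b'neg t ht (fun s hs => hbig s ⟨hs.1, lt_of_le_of_lt hs.2 ht.2⟩) t ⟨ht.1, le_refl t⟩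
    have hbanti : AntitoneOn b (Ico 0 T) := by
      apply antitoneOn_of_deriv_nonpos (convex_Ico 0 T)
      · exact fun x hx => (hb x hx).continuousAt.continuousWithinAt
      · intro x hx
        rw [interior_Ico] at hx
        exact (hb x (Ioo_subset_Ico_self hx)).differentiableAt.differentiableWithinAt
      · intro x hx
        rw [interior_Ico] at hx
        rw [(hb x (Ioo_subset_Ico_self hx)).deriv]
        exact (hneg x (Ioo_subset_Ico_self hx)).le
    have hb'mono : MonotoneOn b' (Ico 0 T) := by
      apply monotoneOn_of_deriv_nonneg (convex_Ico 0 T)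
      · exact fun x hx => (hb' x hx).continuousAt.continuousWithinAt
      · intro x hx
        rw [interior_Ico] at hx
        exact (hb' x (Ioo_subset_Ico_self hx)).differentiableAt.differentiableWithinAt
      · intro x hx
        rw [interior_Ico] at hx
        rw [(hb' x (Ioo_subset_Ico_self hx)).deriv]
        positivity
    have hmaxmem : ∀ t ∈ Iio T, max t 0 ∈ Ico (0:ℝ) T := fun t ht =>
      ⟨le_max_right _ _, max_lt ht hT⟩
    set Lb := sInf ((fun t => b (max t 0)) '' Iio T) with hLbdef
    set Lg := sSup ((fun t => b' (max t 0)) '' Iio T) with hLgdef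
    have hA2 : AntitoneOn (fun t => b (max t 0)) (Iio T) := fun x hx y hy hxy =>
      hbanti (hmaxmem x hx) (hmaxmem y hy) (max_le_max hxy (le_refl 0))
    have hM2 : MonotoneOn (fun t => b' (max t 0)) (Iio T) := fun x hx y hy hxy =>
      hb'mono (hmaxmem x hx) (hmaxmem y hy) (max_le_max hxy (le_refl 0))
    have hbddb : BddBelow ((fun t => b (max t 0)) '' Iio T) := by
      refine ⟨bstar, ?_⟩
      rintro y ⟨x, hx, rfl⟩
      exact (hbig _ (hmaxmem x hx)).le
    have hbddg : BddAbove ((fun t => b' (max t 0)) '' Iio T) := by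
      refine ⟨0, ?_⟩
      rintro y ⟨x, hx, rfl⟩
      exact (hneg _ (hmaxmem x hx)).le
    have hIooT : Ioo (0:ℝ) T ∈ nhdsWithin T (Iio T) :=
      Ioo_mem_nhdsLT_of_mem ⟨hT, le_refl T⟩
    have hmaxeq : (fun t => b (max t 0)) =ᶠ[nhdsWithin T (Iio T)] b := by
      filter_upwards [hIooT] with x hx
      rw [max_eq_left hx.1.le]
    have hmaxeq' : (fun t => b' (max t 0)) =ᶠ[nhdsWithin T (Iio T)] b' := by
      filter_upwards [hIooT] with x hx
      rw [max_eq_left hx.1.le]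
    have hLb : Filter.Tendsto b (nhdsWithin T (Iio T)) (nhds Lb) :=
      (hA2.tendsto_nhdsLT hbddb).congr' hmaxeq
    have hLg : Filter.Tendsto b' (nhdsWithin T (Iio T)) (nhds Lg) :=
      (hM2.tendsto_nhdsLT hbddg).congr' hmaxeq'
    set v : ℝ × ℝ → ℝ × ℝ := fun p => (p.2, 2 * α * p.1 ^ 2) with hv
    have hvC : ContDiff ℝ 1 v := by
      apply ContDiff.prodMk
      · exact contDiff_snd
      · exact contDiff_const.mul (contDiff_fst.pow 2)
    obtain ⟨f, hfT, ε, hε, hfd⟩ :=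
      ContDiffAt.exists_forall_mem_closedBall_exists_eq_forall_mem_Ioo_hasDerivAt₀ (x₀ := ((Lb, Lg) : ℝ × ℝ)) hvC.contDiffAt T
    set W : ℝ → ℝ × ℝ := fun t => if t < T then (b t, b' t) else f t with hW
    have hWeq : ∀ x, x < T → W x = (b x, b' x) := fun x hx => if_pos hx
    have hWeq' : ∀ x, T ≤ x → W x = f x := fun x hx => if_neg (not_lt.mpr hx)
    have hWlt : ∀ t ∈ Ico (0:ℝ) T, HasDerivAt W (b' t, 2 * α * (b t) ^ 2) t := by
      intro t ht
      have hD : HasDerivAt (fun u => (b u, b' u)) (b' t, 2 * α * (b t) ^ 2) t :=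
        (hb t ht).prodMk (hb' t ht)
      apply hD.congr_of_eventuallyEq
      filter_upwards [Iio_mem_nhds ht.2] with x hx
      exact hWeq x hx
    have hWderivlim : Filter.Tendsto (fun t => deriv W t) (nhdsWithin T (Iio T))
        (nhds (Lg, 2 * α * Lb ^ 2)) := by
      have h1 : Filter.Tendsto (fun t => (b' t, 2 * α * (b t) ^ 2)) (nhdsWithin T (Iio T))
          (nhds (Lg, 2 * α * Lb ^ 2)) :=
        Filter.Tendsto.prodMk_nhds hLg (tendsto_const_nhds.mul (hLb.pow 2))
      apply h1.congr'
      filter_upwards [hIooT] with x hx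
      rw [(hWlt x ⟨hx.1.le, hx.2⟩).deriv]
    have hWTval : W T = (Lb, Lg) := by rw [hWeq' T (le_refl T), hfT]
    have hWT : HasDerivWithinAt W (Lg, 2 * α * Lb ^ 2) (Iic T) T := by
      apply hasDerivWithinAt_Iic_of_tendsto_deriv (s := Ioo 0 T)
      · intro x hx
        exact (hWlt x ⟨hx.1.le, hx.2⟩).differentiableAt.differentiableWithinAt
      · unfold ContinuousWithinAt
        rw [hWTval]
        have h2 : Filter.Tendsto (fun t => (b t, b' t)) (nhdsWithin T (Ioo 0 T))
            (nhds (Lb, Lg)) :=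
          Filter.Tendsto.prodMk_nhds
            (hLb.mono_left (nhdsWithin_mono T Ioo_subset_Iio_self))
            (hLg.mono_left (nhdsWithin_mono T Ioo_subset_Iio_self))
        apply h2.congr'
        filter_upwards [self_mem_nhdsWithin] with x hx
        exact (hWeq x hx.2).symm
      · exact hIooT
      · exact hWderivlim
    have hright : HasDerivWithinAt W (Lg, 2 * α * Lb ^ 2) (Ici T) T := by
      have h1 : HasDerivAt f (v (f T)) T := hfd T ⟨by linarith, by linarith⟩
      rw [hfT] at h1
      have h2 : v ((Lb, Lg) : ℝ × ℝ) = (Lg, 2 * α * Lb ^ 2) := rfl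
      rw [h2] at h1
      exact h1.hasDerivWithinAt.congr (fun x hx => hWeq' x hx) (hWeq' T (le_refl T))
    have hWTfull : HasDerivAt W (Lg, 2 * α * Lb ^ 2) T := by
      have h3 := hWT.union hright
      rw [Iic_union_Ici] at h3
      rwa [hasDerivWithinAt_univ] at h3
    have hWgt : ∀ t ∈ Ioo T (T + ε), HasDerivAt W ((W t).2, 2 * α * (W t).1 ^ 2) t := by
      intro t ht
      have h1 : HasDerivAt f (v (f t)) t := hfd t ⟨by linarith [ht.1], ht.2⟩
      have hWf : W t = f t := hWeq' t ht.1.le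
      have h2 : HasDerivAt W (v (f t)) t := by
        apply h1.congr_of_eventuallyEq
        filter_upwards [Ioi_mem_nhds ht.1] with x hx
        exact hWeq' x hx.le
      rw [← hWf] at h2
      exact h2
    apply hmax (T + ε) (by linarith)
    refine ⟨fun t => (W t).1, fun t => (W t).2, ?_, ?_, ?_⟩
    · intro t ht
      have hWd : HasDerivAt W ((W t).2, 2 * α * (W t).1 ^ 2) t := by
        rcases lt_trichotomy t T with h | h | h
        · have h' := hWlt t ⟨ht.1, h⟩
          have he : W t = (b t, b' t) := hWeq t h
          rw [he]
          exact h'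
        · subst h
          rw [hWTval]
          exact hWTfull
        · exact hWgt t ⟨h, ht.2⟩
      exact ⟨aux_hasDerivAt_fst hWd, aux_hasDerivAt_snd hWd⟩
    · show (W 0).1 = b₀
      rw [hWeq 0 hT]
      exact hb0
    · show (W 0).2 = g₀
      rw [hWeq 0 hT]
      exact hb'0

  -- Part II
  obtain ⟨t₁, ht₁, hbt₁⟩ := hit
  -- first hitting time
  set S : Set ℝ := Icc 0 t₁ ∩ b ⁻¹' {bstar} with hS
  have hbcont₁ : ContinuousOn b (Icc 0 t₁) := fun x hx =>
    (hb x ⟨hx.1, lt_of_le_of_lt hx.2 ht₁.2⟩).continuousAt.continuousWithinAt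
  have hScl : IsClosed S := hbcont₁.preimage_isClosed_of_isClosed isClosed_Icc isClosed_singleton
  have hSne : S.Nonempty := ⟨t₁, ⟨ht₁.1, le_refl t₁⟩, hbt₁⟩
  have hSbdd : BddBelow S := ⟨0, fun x hx => hx.1.1⟩
  set τ := sInf S with hτ
  have hτS : τ ∈ S := hScl.csInf_mem hSne hSbdd
  have hτ0 : 0 ≤ τ := hτS.1.1
  have hτt₁ : τ ≤ t₁ := hτS.1.2
  have hτT : τ < T := lt_of_le_of_lt hτt₁ ht₁.2
  have hbτ : b τ = bstar := hτS.2
  have hτpos : 0 < τ := by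
    rcases hτ0.lt_or_eq with h | h
    · exact h
    · exfalso
      rw [← h] at hbτ
      rw [hb0] at hbτ
      exact absurd hbτ (ne_of_gt hb₀s)
  have hmin : ∀ t ∈ Ico (0 : ℝ) τ, b t ≠ bstar := by
    intro t ht habs
    have : t ∈ S := ⟨⟨ht.1, le_trans ht.2.le hτt₁⟩, habs⟩
    exact absurd (csInf_le hSbdd this) (not_le.mpr ht.2)
  have hbig2 : ∀ t ∈ Ico (0 : ℝ) τ, bstar < b t := by
    intro t ht
    exact bgt t ⟨ht.1, lt_trans ht.2 hτT⟩
      (fun s hs => hmin s ⟨hs.1, lt_of_le_of_lt hs.2 ht.2⟩) t ⟨ht.1, le_refl t⟩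
  have hneg2 : ∀ t ∈ Ico (0 : ℝ) τ, b' t < 0 := by
    intro t ht
    exact b'neg t ⟨ht.1, lt_trans ht.2 hτT⟩
      (fun s hs => hbig2 s ⟨hs.1, lt_of_le_of_lt hs.2 ht.2⟩) t ⟨ht.1, le_refl t⟩
  have hb'τ : b' τ = 0 := by
    have hE := energy τ ⟨hτ0, hτT⟩
    rw [hbτ] at hE
    have : (b' τ) ^ 2 = 0 := by linarith
    exact pow_eq_zero_iff (n := 2) (by norm_num) |>.mp this
  have hbcontτ : ContinuousOn b (Icc 0 τ) := fun x hx =>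
    (hb x ⟨hx.1, lt_of_le_of_lt hx.2 hτT⟩).continuousAt.continuousWithinAt
  have hanti : StrictAntiOn b (Icc 0 τ) := by
    apply strictAntiOn_of_deriv_neg (convex_Icc 0 τ) hbcontτ
    intro x hx
    rw [interior_Icc] at hx
    rw [(hb x ⟨hx.1.le, lt_trans hx.2 hτT⟩).deriv]
    exact hneg2 x ⟨hx.1.le, hx.2⟩
  have hrange : ∀ t ∈ Icc (0 : ℝ) τ, b t ∈ Icc bstar b₀ := by
    intro t ht
    constructor
    · rcases ht.2.lt_or_eq with h | h
      · exact (hbig2 t ⟨ht.1, h⟩).le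
      · rw [h, hbτ]
    · rw [← hb0]
      exact hanti.antitoneOn (left_mem_Icc.mpr hτ0) ht ht.1
  -- the integrand
  set φ : ℝ → ℝ := fun x => (Real.sqrt ((4 / 3) * α * x ^ 3 + 2 * c))⁻¹ with hφ
  have hinner_pos : ∀ x : ℝ, bstar < x → 0 < (4 / 3) * α * x ^ 3 + 2 * c := by
    intro x hx
    have := aux_cube_lt' hx
    nlinarith
  have hφmeas : Measurable φ := by
    apply Measurable.inv
    exact (Real.continuous_sqrt.comp ((continuous_const.mul (continuous_pow 3)).add continuous_const)).measurable
  have hbsq : 0 < bstar ^ 2 := by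
    rcases hbstar0.lt_or_gt with h | h <;> nlinarith
  -- integrability
  have hkey : IntervalIntegrable φ MeasureTheory.volume bstar b₀ := by
    have hg : IntervalIntegrable (fun x => (Real.sqrt (α * bstar ^ 2))⁻¹ * ((x - bstar) ^ (-(1:ℝ)/2)))
        MeasureTheory.volume bstar b₀ := by
      have h1 : IntervalIntegrable (fun x : ℝ => x ^ (-(1:ℝ)/2)) MeasureTheory.volume 0 (b₀ - bstar) :=
        intervalIntegral.intervalIntegrable_rpow' (by norm_num)
      have h2 := (h1.comp_sub_right bstar).const_mul (Real.sqrt (α * bstar ^ 2))⁻¹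
      simpa using h2
    apply hg.mono_fun (hφmeas.aestronglyMeasurable)
    rw [uIoc_of_le hb₀s.le]
    filter_upwards [MeasureTheory.ae_restrict_mem measurableSet_Ioc] with x hx
    have hxs : 0 < x - bstar := by linarith [hx.1]
    have hsqrt_pos : 0 < Real.sqrt (α * bstar ^ 2) := Real.sqrt_pos.mpr (by positivity)
    have hA : α * bstar ^ 2 * (x - bstar) ≤ (4 / 3) * α * x ^ 3 + 2 * c := by
      nlinarith [mul_nonneg hxs.le (sq_nonneg (x + bstar / 2)), hs3]
    have hApos : 0 < α * bstar ^ 2 * (x - bstar) := by positivity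
    have hle : Real.sqrt (α * bstar ^ 2 * (x - bstar)) ≤
        Real.sqrt ((4 / 3) * α * x ^ 3 + 2 * c) := Real.sqrt_le_sqrt hA
    have hinv : φ x ≤ (Real.sqrt (α * bstar ^ 2 * (x - bstar)))⁻¹ := by
      apply inv_anti₀ (Real.sqrt_pos.mpr hApos) hle
    have hsplit : Real.sqrt (α * bstar ^ 2 * (x - bstar)) =
        Real.sqrt (α * bstar ^ 2) * Real.sqrt (x - bstar) :=
      Real.sqrt_mul (by positivity) _
    have hrpow : (x - bstar) ^ (-(1:ℝ)/2) = (Real.sqrt (x - bstar))⁻¹ := by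
      rw [show (-(1:ℝ)/2) = -(1/2) by norm_num, Real.rpow_neg hxs.le, ← Real.sqrt_eq_rpow]
    have hφnn : 0 ≤ φ x := by positivity
    rw [Real.norm_eq_abs, Real.norm_eq_abs, abs_of_nonneg hφnn, abs_of_nonneg (by positivity)]
    calc φ x ≤ (Real.sqrt (α * bstar ^ 2 * (x - bstar)))⁻¹ := hinv
      _ = (Real.sqrt (α * bstar ^ 2))⁻¹ * (Real.sqrt (x - bstar))⁻¹ := by
          rw [hsplit, mul_inv]
      _ = (Real.sqrt (α * bstar ^ 2))⁻¹ * ((x - bstar) ^ (-(1:ℝ)/2)) := by rw [hrpow]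
  -- primitive
  set F : ℝ → ℝ := fun y => ∫ x in y..b₀, φ x with hF
  have hIcc : MeasureTheory.IntegrableOn φ (uIcc bstar b₀) MeasureTheory.volume := by
    rw [uIcc_of_le hb₀s.le]
    exact (intervalIntegrable_iff_integrableOn_Icc_of_le hb₀s.le).mp hkey
  have hFcont : ContinuousOn F (Icc bstar b₀) := by
    have := intervalIntegral.continuousOn_primitive_interval_left hIcc
    rwa [uIcc_of_le hb₀s.le] at this
  have hFderiv : ∀ y ∈ Ioc bstar b₀, HasDerivAt F (-φ y) y := by
    intro y hy
    have hsub : IntervalIntegrable φ MeasureTheory.volume b₀ y := by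
      apply hkey.mono_set
      rw [uIcc_of_le hb₀s.le, uIcc_comm, uIcc_of_le hy.2]
      exact Icc_subset_Icc hy.1.le le_rfl
    have hcontAt : ContinuousAt φ y := by
      apply ContinuousAt.inv₀
      · exact (Real.continuous_sqrt.comp ((continuous_const.mul (continuous_pow 3)).add continuous_const)).continuousAt
      · exact ne_of_gt (Real.sqrt_pos.mpr (hinner_pos y hy.1))
    have G := intervalIntegral.integral_hasDerivAt_right hsub
      ⟨univ, Filter.univ_mem, hφmeas.aestronglyMeasurable⟩ hcontAt
    have hFeq : F = fun z => -(∫ x in b₀..z, φ x) :=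
      funext fun z => intervalIntegral.integral_symm b₀ z
    rw [hFeq]
    exact G.neg
  -- F (b t) = t on [0, τ]
  have hcomp : ∀ t ∈ Ico (0:ℝ) τ, HasDerivAt (fun u => F (b u)) 1 t := by
    intro t ht
    have hbt : b t ∈ Ioc bstar b₀ := ⟨hbig2 t ht, (hrange t ⟨ht.1, ht.2.le⟩).2⟩
    have hchain := (hFderiv (b t) hbt).comp t (hb t ⟨ht.1, lt_trans ht.2 hτT⟩)
    have hbt' : Real.sqrt ((4 / 3) * α * (b t) ^ 3 + 2 * c) = -(b' t) := by
      rw [show (4 / 3) * α * (b t) ^ 3 + 2 * c = (b' t) ^ 2 by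
        linarith [energy t ⟨ht.1, lt_trans ht.2 hτT⟩]]
      rw [Real.sqrt_sq_eq_abs, abs_of_nonpos (hneg2 t ht).le]
    have hval : -φ (b t) * b' t = 1 := by
      rw [hφ]
      simp only
      rw [hbt']
      have : b' t ≠ 0 := ne_of_lt (hneg2 t ht)
      field_simp
    rw [← hval]
    exact hchain
  have hconst : F (b τ) - τ = F (b 0) - 0 := by
    have := constant_of_has_deriv_right_zero (f := fun u => F (b u) - u) (a := 0) (b := τ)
      ?_ ?_ τ (right_mem_Icc.mpr hτ0)
    · simpa using this
    · apply ContinuousOn.sub _ continuousOn_id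
      exact hFcont.comp hbcontτ (fun x hx => hrange x hx)
    · intro x hx
      have h := (hcomp x hx).sub (hasDerivAt_id x)
      simpa [Pi.sub_def] using h.hasDerivWithinAt
  have hIt : (∫ x in bstar..b₀, (Real.sqrt ((4 / 3) * α * x ^ 3 + 2 * c))⁻¹) = τ := by
    have h2 : F (b 0) = 0 := by
      rw [hb0, hF]
      simp only
      exact intervalIntegral.integral_same
    rw [h2] at hconst
    rw [← hbτ]
    linarith
  refine ⟨⟨τ, hτpos, hanti⟩, ?_, ?_, ?_⟩
  · rw [hIt]; exact ⟨hτ0, hτT⟩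
  · rw [hIt]; exact hbτ
  · rw [hIt]; exact hb'τ
end

section
/- Let H : [T₁, T) → ℝ be C² with H(T₁) = H'(T₁) = 0, and suppose H''(t) ≥ ε > 0 and H''(t) ≥ K H(t)²/(t+1)² for all t ∈ [T₁, T), with K, ε > 0. Then T < ∞; that is, H blows up in finite time. -/
open Set

lemma myMonoOn {s : Set ℝ} (hs : Convex ℝ s) (f f' : ℝ → ℝ)
    (hf : ∀ t ∈ s, HasDerivAt f (f' t) t)
    (h0 : ∀ t ∈ interior s, 0 ≤ f' t) : MonotoneOn f s := by
  apply monotoneOn_of_deriv_nonneg hs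
  · exact fun t ht => (hf t ht).continuousAt.continuousWithinAt
  · exact fun t ht => ((hf t (interior_subset ht)).differentiableAt).differentiableWithinAt
  · intro t ht
    rw [(hf t (interior_subset ht)).deriv]
    exact h0 t ht

lemma myAntiOn {s : Set ℝ} (hs : Convex ℝ s) (f f' : ℝ → ℝ)
    (hf : ∀ t ∈ s, HasDerivAt f (f' t) t)
    (h0 : ∀ t ∈ interior s, f' t ≤ 0) : AntitoneOn f s := by
  apply antitoneOn_of_deriv_nonpos hs
  · exact fun t ht => (hf t ht).continuousAt.continuousWithinAt
  · exact fun t ht => ((hf t (interior_subset ht)).differentiableAt).differentiableWithinAt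
  · intro t ht
    rw [(hf t (interior_subset ht)).deriv]
    exact h0 t ht

set_option maxHeartbeats 2000000 in
/-- No global-in-time C² function can satisfy both differential inequalities:
`H'' ≥ ε > 0` and `H'' ≥ K H²/(t+1)²` with `H(T₁) = H'(T₁) = 0`. -/
theorem stmt_16 (T₁ ε K : ℝ) (hT₁ : 0 ≤ T₁) (hε : 0 < ε) (hK : 0 < K)
    (H H' H'' : ℝ → ℝ)
    (hH : ∀ t ∈ Set.Ici T₁, HasDerivAt H (H' t) t)
    (hH' : ∀ t ∈ Set.Ici T₁, HasDerivAt H' (H'' t) t)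
    (h0 : H T₁ = 0) (h0' : H' T₁ = 0)
    (hineq1 : ∀ t ∈ Set.Ici T₁, ε ≤ H'' t)
    (hineq2 : ∀ t ∈ Set.Ici T₁, K * (H t) ^ 2 / (t + 1) ^ 2 ≤ H'' t) :
    False := by
  -- Step 1: H' t ≥ ε (t - T₁)
  have step1 : ∀ t ∈ Ici T₁, ε * (t - T₁) ≤ H' t := by
    have mono : MonotoneOn (fun t => H' t - ε * (t - T₁)) (Ici T₁) := by
      apply myMonoOn (convex_Ici T₁) _ (fun t => H'' t - ε)
      · intro t ht
        have h : HasDerivAt (fun t => H' t - ε * (t - T₁)) (H'' t - ε * 1) t :=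
          (hH' t ht).sub (((hasDerivAt_id t).sub_const T₁).const_mul ε)
        simpa using h
      · intro t ht
        rw [interior_Ici] at ht
        have := hineq1 t (mem_Ici.mpr (le_of_lt ht))
        linarith
    intro t ht
    have h2 : H' T₁ - ε * (T₁ - T₁) ≤ H' t - ε * (t - T₁) := mono self_mem_Ici ht ht
    rw [h0'] at h2
    linarith
  have hH'0 : ∀ t ∈ Ici T₁, 0 ≤ H' t := by
    intro t ht
    have := step1 t ht
    nlinarith [mem_Ici.mp ht]
  -- Step 2: H t ≥ (ε/2) (t - T₁)²
  have step2 : ∀ t ∈ Ici T₁, ε / 2 * (t - T₁) ^ 2 ≤ H t := by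
    have mono : MonotoneOn (fun t => H t - ε / 2 * (t - T₁) ^ 2) (Ici T₁) := by
      apply myMonoOn (convex_Ici T₁) _ (fun t => H' t - ε * (t - T₁))
      · intro t ht
        have h1 : HasDerivAt (fun t : ℝ => (t - T₁) ^ 2) (2 * (t - T₁) ^ 1 * 1) t :=
          ((hasDerivAt_id t).sub_const T₁).pow 2
        have h2 := (h1.const_mul (ε / 2))
        have : HasDerivAt (fun t => H t - ε / 2 * (t - T₁) ^ 2)
            (H' t - ε / 2 * (2 * (t - T₁) ^ 1 * 1)) t := (hH t ht).sub h2
        convert this using 1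
        ring
      · intro t ht
        rw [interior_Ici] at ht
        exact sub_nonneg.mpr (step1 t (mem_Ici.mpr (le_of_lt ht)))
    intro t ht
    have h2 : H T₁ - ε / 2 * (T₁ - T₁) ^ 2 ≤ H t - ε / 2 * (t - T₁) ^ 2 :=
      mono self_mem_Ici ht ht
    rw [h0] at h2
    nlinarith
  have hHmono : MonotoneOn H (Ici T₁) := myMonoOn (convex_Ici T₁) H H' hH
    (fun t ht => hH'0 t (mem_Ici.mpr (le_of_lt (by rwa [interior_Ici] at ht))))
  -- T₂ and positivity
  set T₂ : ℝ := T₁ + 1 with hT₂def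
  have hT₂mem : T₂ ∈ Ici T₁ := by simp [hT₂def]
  set A : ℝ := H T₂ with hAdef
  have hA : ε / 2 ≤ A := by
    have := step2 T₂ hT₂mem
    simpa [hT₂def] using this
  have hApos : 0 < A := lt_of_lt_of_le (by linarith) hA
  have hHpos : ∀ s ∈ Ici T₂, 0 < H s := by
    intro s hs
    have hs1 : T₁ ≤ s := le_trans (by simp [hT₂def]) hs
    have := hHmono hT₂mem hs1 hs
    linarith
  -- Step B : energy inequality
  have stepB : ∀ s ∈ Ici T₂, 2 * K / 3 * ((H s) ^ 3 - A ^ 3) ≤ (H' s) ^ 2 * (s + 1) ^ 2 := by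
    intro s hs
    have hsT₁ : T₁ ≤ s := le_trans (by simp [hT₂def]) hs
    have mono : MonotoneOn (fun t => (H' t) ^ 2 * (s + 1) ^ 2 - 2 * K / 3 * (H t) ^ 3)
        (Icc T₂ s) := by
      apply myMonoOn (convex_Icc T₂ s) _
        (fun t => 2 * H' t * H'' t * (s + 1) ^ 2 - 2 * K * (H t) ^ 2 * H' t)
      · intro t ht
        have htI : t ∈ Ici T₁ := le_trans (by simp [hT₂def]) ht.1
        have h1 : HasDerivAt (fun t => (H' t) ^ 2) (2 * (H' t) ^ 1 * H'' t) t :=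
          (hH' t htI).pow 2
        have h2 : HasDerivAt (fun t => (H t) ^ 3) (3 * (H t) ^ 2 * H' t) t :=
          (hH t htI).pow 3
        have : HasDerivAt (fun t => (H' t) ^ 2 * (s + 1) ^ 2 - 2 * K / 3 * (H t) ^ 3)
            (2 * (H' t) ^ 1 * H'' t * (s + 1) ^ 2 - 2 * K / 3 * (3 * (H t) ^ 2 * H' t)) t :=
          (h1.mul_const ((s + 1) ^ 2)).sub (h2.const_mul (2 * K / 3))
        convert this using 1
        ring
      · intro t ht
        rw [interior_Icc] at ht
        have htI : t ∈ Ici T₁ := le_trans (by simp [hT₂def]) (le_of_lt ht.1)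
        have ht1 : (0:ℝ) < t + 1 := by
          have : T₁ ≤ t := htI; linarith
        have hts : t + 1 ≤ s + 1 := by linarith [ht.2]
        have hkey : K * (H t) ^ 2 ≤ H'' t * (t + 1) ^ 2 := by
          have := hineq2 t htI
          have h2 := (div_le_iff₀ (by positivity : (0:ℝ) < (t+1)^2)).mp this
          linarith
        have hq : (t + 1) ^ 2 ≤ (s + 1) ^ 2 := by nlinarith
        have hH'nn := hH'0 t htI
        have hH''nn : 0 ≤ H'' t := le_trans (le_of_lt hε) (hineq1 t htI)
        nlinarith [sq_nonneg (H t), mul_nonneg hH'nn hH''nn]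
    have h2 : (H' T₂) ^ 2 * (s + 1) ^ 2 - 2 * K / 3 * (H T₂) ^ 3 ≤
        (H' s) ^ 2 * (s + 1) ^ 2 - 2 * K / 3 * (H s) ^ 3 :=
      mono (left_mem_Icc.mpr hs) (right_mem_Icc.mpr hs) hs
    have hnn : 0 ≤ (H' T₂) ^ 2 * (s + 1) ^ 2 := by positivity
    nlinarith
  -- T₃ : past this point H s ≥ 2A
  set T₃ : ℝ := max T₂ (T₁ + Real.sqrt (4 * A / ε)) with hT₃def
  have hT₃T₂ : T₂ ≤ T₃ := le_max_left _ _
  have hH2A : ∀ s ∈ Ici T₃, 2 * A ≤ H s := by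
    intro s hs
    have hs2 : T₁ + Real.sqrt (4 * A / ε) ≤ s := le_trans (le_max_right _ _) hs
    have hsT₁ : T₁ ≤ s := by
      have : (0:ℝ) ≤ Real.sqrt (4 * A / ε) := Real.sqrt_nonneg _
      linarith
    have hlow := step2 s hsT₁
    have hsq : 4 * A / ε ≤ (s - T₁) ^ 2 := by
      have h1 : Real.sqrt (4 * A / ε) ≤ s - T₁ := by linarith
      have h2 : (0:ℝ) ≤ 4 * A / ε := by positivity
      nlinarith [Real.sq_sqrt h2, Real.sqrt_nonneg (4 * A / ε)]
    have : 2 * A ≤ ε / 2 * (s - T₁) ^ 2 := by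
      rw [div_le_iff₀ hε] at hsq
      nlinarith
    linarith
  -- Step C : (K/3) H³ ≤ H'² (s+1)²
  have stepC : ∀ s ∈ Ici T₃, K / 3 * (H s) ^ 3 ≤ (H' s) ^ 2 * (s + 1) ^ 2 := by
    intro s hs
    have hsT₂ : s ∈ Ici T₂ := le_trans hT₃T₂ hs
    have hB := stepB s hsT₂
    have h2A := hH2A s hs
    have hcube : 2 * A ^ 3 ≤ (H s) ^ 3 := by
      have h := pow_le_pow_left₀ (by positivity : (0:ℝ) ≤ 2 * A) h2A 3
      have h8 : (2 * A) ^ 3 = 8 * A ^ 3 := by ring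
      have hA3 : (0:ℝ) ≤ A ^ 3 := by positivity
      linarith
    nlinarith
  -- c and the Lyapunov function
  set c : ℝ := Real.sqrt (K / 3) with hcdef
  have hcpos : 0 < c := Real.sqrt_pos.mpr (by positivity)
  have hc2 : c ^ 2 = K / 3 := Real.sq_sqrt (by positivity)
  -- Step D : c · H √H ≤ H' (s+1)
  have stepD : ∀ s ∈ Ici T₃, c * (H s * Real.sqrt (H s)) ≤ H' s * (s + 1) := by
    intro s hs
    have hsT₂ : s ∈ Ici T₂ := le_trans hT₃T₂ hs
    have hsT₁ : T₁ ≤ s := le_trans (by simp [hT₂def]) hsT₂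
    have hHp := hHpos s hsT₂
    have hs1 : (0:ℝ) < s + 1 := by linarith
    have ha : (0:ℝ) ≤ c * (H s * Real.sqrt (H s)) := by positivity
    have hb : (0:ℝ) ≤ H' s * (s + 1) :=
      mul_nonneg (hH'0 s hsT₁) hs1.le
    have hsq : (c * (H s * Real.sqrt (H s))) ^ 2 ≤ (H' s * (s + 1)) ^ 2 := by
      have h1 : (c * (H s * Real.sqrt (H s))) ^ 2 = K / 3 * (H s) ^ 3 := by
        have hs2 := Real.sq_sqrt hHp.le
        calc (c * (H s * Real.sqrt (H s))) ^ 2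
            = c ^ 2 * ((H s) ^ 2 * (Real.sqrt (H s)) ^ 2) := by ring
          _ = K / 3 * (H s) ^ 3 := by rw [hc2, hs2]; ring
      rw [h1]
      calc K / 3 * (H s) ^ 3 ≤ (H' s) ^ 2 * (s + 1) ^ 2 := stepC s hs
        _ = (H' s * (s + 1)) ^ 2 := by ring
    calc c * (H s * Real.sqrt (H s)) = Real.sqrt ((c * (H s * Real.sqrt (H s))) ^ 2) :=
          (Real.sqrt_sq ha).symm
      _ ≤ Real.sqrt ((H' s * (s + 1)) ^ 2) := Real.sqrt_le_sqrt hsq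
      _ = H' s * (s + 1) := Real.sqrt_sq hb
  -- F is antitone
  set F : ℝ → ℝ := fun s => (Real.sqrt (H s))⁻¹ + c / 2 * Real.log (s + 1) with hFdef
  have hFanti : AntitoneOn F (Ici T₃) := by
    apply myAntiOn (convex_Ici T₃) F
      (fun s => -(1 / (2 * Real.sqrt (H s)) * H' s) / (Real.sqrt (H s)) ^ 2
        + c / 2 * ((s + 1)⁻¹ * 1))
    · intro s hs
      have hsT₂ : s ∈ Ici T₂ := le_trans hT₃T₂ hs
      have hsT₁ : T₁ ≤ s := le_trans (by simp [hT₂def]) hsT₂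
      have hHp := hHpos s hsT₂
      have hs1 : (0:ℝ) < s + 1 := by linarith
      have hsqrt : HasDerivAt (fun t => Real.sqrt (H t)) (1 / (2 * Real.sqrt (H s)) * H' s) s :=
        (Real.hasDerivAt_sqrt hHp.ne').comp s (hH s hsT₁)
      have hinv := hsqrt.inv (Real.sqrt_pos.mpr hHp).ne'
      have hlin : HasDerivAt (fun t : ℝ => t + 1) 1 s := (hasDerivAt_id s).add_const 1
      have hlog : HasDerivAt (fun t : ℝ => Real.log (t + 1)) ((s + 1)⁻¹ * 1) s :=
        by simpa using hlin.log hs1.ne'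
      exact hinv.add (hlog.const_mul (c / 2))
    · intro s hs
      rw [interior_Ici] at hs
      have hs' : s ∈ Ici T₃ := mem_Ici.mpr (le_of_lt hs)
      have hsT₂ : s ∈ Ici T₂ := le_trans hT₃T₂ hs'
      have hsT₁ : T₁ ≤ s := le_trans (by simp [hT₂def]) hsT₂
      have hHp := hHpos s hsT₂
      have hs1 : (0:ℝ) < s + 1 := by linarith
      have hP : (0:ℝ) < Real.sqrt (H s) := Real.sqrt_pos.mpr hHp
      have hPsq : (Real.sqrt (H s)) ^ 2 = H s := Real.sq_sqrt hHp.le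
      have hD := stepD s hs'
      set P := Real.sqrt (H s) with hPdef
      have hPne : P ≠ 0 := hP.ne'
      have h1 : -(1 / (2 * P) * H' s) / P ^ 2 = -(H' s / (2 * P ^ 3)) := by
        rw [neg_div, neg_inj, div_eq_div_iff (by positivity) (by positivity)]
        field_simp
      have h2 : c / 2 * ((s + 1)⁻¹ * 1) = c / (2 * (s + 1)) := by
        field_simp
      rw [h1, h2]
      have hgoal : c / (2 * (s + 1)) ≤ H' s / (2 * P ^ 3) := by
        rw [div_le_div_iff₀ (by positivity) (by positivity)]
        have hD' : c * (P ^ 2 * P) ≤ H' s * (s + 1) := by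
          rw [hPsq]; exact hD
        nlinarith
      linarith
  -- Contradiction
  have hT₃T₁ : T₁ ≤ T₃ := le_trans (by simp [hT₂def]) hT₃T₂
  clear_value T₃
  clear hT₃def
  have key : ∀ s ∈ Ici T₃, (Real.sqrt (H s))⁻¹ + c / 2 * Real.log (s + 1) ≤
      (Real.sqrt (H T₃))⁻¹ + c / 2 * Real.log (T₃ + 1) := by
    intro s hs
    exact hFanti self_mem_Ici hs hs
  set B : ℝ := (Real.sqrt (H T₃))⁻¹ + c / 2 * Real.log (T₃ + 1) with hBdef
  clear_value B
  set s₀ : ℝ := max T₃ (Real.exp (2 * (B + 1) / c)) with hs₀def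
  have hs₀T₃ : s₀ ∈ Ici T₃ := mem_Ici.mpr (le_max_left _ _)
  have hexp : Real.exp (2 * (B + 1) / c) ≤ s₀ := le_max_right _ _
  have hpos : 0 < (Real.sqrt (H s₀))⁻¹ := by
    have := hHpos s₀ (le_trans hT₃T₂ hs₀T₃)
    positivity
  have hle : (Real.sqrt (H s₀))⁻¹ + c / 2 * Real.log (s₀ + 1) ≤ B := key s₀ hs₀T₃
  have hlog : 2 * (B + 1) / c ≤ Real.log (s₀ + 1) := by
    have h1 : Real.exp (2 * (B + 1) / c) ≤ s₀ + 1 := by linarith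
    calc 2 * (B + 1) / c = Real.log (Real.exp (2 * (B + 1) / c)) := (Real.log_exp _).symm
      _ ≤ Real.log (s₀ + 1) := Real.log_le_log (Real.exp_pos _) h1
  set L : ℝ := Real.log (s₀ + 1) with hLdef
  set R : ℝ := (Real.sqrt (H s₀))⁻¹ with hRdef
  clear_value L R
  rw [div_le_iff₀ hcpos] at hlog
  nlinarith [hle, hlog, hpos, hcpos]
end

section
/- Let f, g : ℝ → ℝ be continuous with support in [-X, X], and let u₀(x,t) = (1/2)(f(x-t) + f(x+t)) + (1/2)∫_{x-t}^{x+t} g(ξ) dξ be the free wave evolution. Define M(x) = (1/2) f(x) + (1/2)∫_x^X g(ξ) dξ. Then for any t ≥ (X - X₀)/2 with 0 < X₀ < X, ∫_{t+X₀}^{t+X} u₀(x,t) dx = ∫_{X₀}^{X} M(x) dx. -/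
open Set

lemma vanish_ge (X : ℝ) (h : ℝ → ℝ) (hc : Continuous h)
    (hz : ∀ x, x ∉ Set.Icc (-X) X → h x = 0) : ∀ x, X ≤ x → h x = 0 := by
  intro x hx
  rcases eq_or_lt_of_le hx with heq | hlt
  · rw [← heq]
    have h1 : Filter.Tendsto h (nhdsWithin X (Set.Ioi X)) (nhds (h X)) :=
      (hc.tendsto X).mono_left nhdsWithin_le_nhds
    have h2 : Filter.Tendsto h (nhdsWithin X (Set.Ioi X)) (nhds 0) := by
      apply Filter.Tendsto.congr' _ tendsto_const_nhds
      filter_upwards [self_mem_nhdsWithin] with y hy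
      have : X < y := hy
      exact (hz y (by simp [Set.mem_Icc]; intro; linarith)).symm
    exact tendsto_nhds_unique h1 h2
  · exact hz x (by simp [Set.mem_Icc]; intro; linarith)

theorem stmt_17 (X X₀ t : ℝ) (hX₀ : 0 < X₀) (hX : X₀ < X)
    (ht : (X - X₀) / 2 ≤ t)
    (f g : ℝ → ℝ) (hf : Continuous f) (hg : Continuous g)
    (hfs : ∀ x, x ∉ Set.Icc (-X) X → f x = 0)
    (hgs : ∀ x, x ∉ Set.Icc (-X) X → g x = 0)
    (u₀ : ℝ → ℝ → ℝ)
    (hu₀ : ∀ x s, u₀ x s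
      = (1 / 2) * (f (x - s) + f (x + s)) + (1 / 2) * ∫ ξ in (x - s)..(x + s), g ξ)
    (M : ℝ → ℝ)
    (hM : ∀ x, M x = (1 / 2) * f x + (1 / 2) * ∫ ξ in x..X, g ξ) :
    (∫ x in (t + X₀)..(t + X), u₀ x t) = ∫ x in X₀..X, M x := by
  have keyf := vanish_ge X f hf hfs
  have keyg := vanish_ge X g hg hgs
  have hcongr : ∀ x ∈ Set.uIcc (t + X₀) (t + X), u₀ x t = M (x - t) := by
    intro x hx
    rw [Set.uIcc_of_le (by linarith)] at hx
    obtain ⟨hx1, hx2⟩ := hx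
    have hxt : X ≤ x + t := by linarith
    have hsplit : (∫ ξ in (x - t)..(x + t), g ξ)
        = (∫ ξ in (x - t)..X, g ξ) + ∫ ξ in X..(x + t), g ξ :=
      (intervalIntegral.integral_add_adjacent_intervals
        (hg.intervalIntegrable _ _) (hg.intervalIntegrable _ _)).symm
    have hzero : (∫ ξ in X..(x + t), g ξ) = 0 := by
      have hz : Set.EqOn g (fun _ => (0 : ℝ)) (Set.uIcc X (x + t)) := by
        intro ξ hξ
        rw [Set.uIcc_of_le hxt] at hξ
        exact keyg ξ hξ.1
      rw [intervalIntegral.integral_congr hz]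
      simp
    rw [hu₀, hM, keyf (x + t) hxt, hsplit, hzero]
    ring
  rw [intervalIntegral.integral_congr hcongr,
    intervalIntegral.integral_comp_sub_right M t]
  congr 1 <;> ring
end
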